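/- (The theorem of periodicity for quadratic irrationals, attributed by the paper to Theaetetus; Lagrange's theorem.) Let x be a real number with 1 < x, x irrational, and suppose there exist integers A, B, C with A ≠ 0 and A*x² + B*x + C = 0. Let e be the anthyphairesis remainder sequence of (x, 1). Then e n ≠ 0 for all n, and the quotient sequence is eventually periodic: there exist N : ℕ and p : ℕ with 0 < p such that for every k ≥ N, ⌊e (k + p) / e (k + p + 1)⌋ = ⌊e k / e (k+1)⌋. -/

import Mathlib

/-- `e` is the anthyphairesis remainder sequence of the pair `(a, b)`:
`e 0 = a`, `e 1 = b`, and each new remainder is obtained by division with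
remainder of `e n` by `e (n+1)` (stopping, i.e. giving `0`, once a remainder vanishes). -/
def IsAnthSeq (a b : ℝ) (e : ℕ → ℝ) : Prop :=
  e 0 = a ∧ e 1 = b ∧
    ∀ n : ℕ,
      (e (n + 1) ≠ 0 → e (n + 2) = e n - (⌊e n / e (n + 1)⌋ : ℝ) * e (n + 1)) ∧
      (e (n + 1) = 0 → e (n + 2) = 0)

namespace QIAux

/-- two-step integer recursion -/
def rec2 (q : ℕ → ℤ) (a b : ℤ) : ℕ → ℤ × ℤ
  | 0 => (a, b)
  | n + 1 => ((rec2 q a b n).2, (rec2 q a b n).1 - q n * (rec2 q a b n).2)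

lemma rec2_succ_snd (q : ℕ → ℤ) (a b : ℤ) (n : ℕ) :
    (rec2 q a b (n + 1)).2 = (rec2 q a b n).1 - q n * (rec2 q a b n).2 := rfl

def al (q : ℕ → ℤ) (n : ℕ) : ℤ := (rec2 q 1 0 n).1
def be (q : ℕ → ℤ) (n : ℕ) : ℤ := (rec2 q 0 1 n).1

lemma al0 (q : ℕ → ℤ) : al q 0 = 1 := rfl
lemma al1 (q : ℕ → ℤ) : al q 1 = 0 := rfl
lemma be0 (q : ℕ → ℤ) : be q 0 = 0 := rfl
lemma be1 (q : ℕ → ℤ) : be q 1 = 1 := rfl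
lemma al_rec (q : ℕ → ℤ) (n : ℕ) : al q (n + 2) = al q n - q n * al q (n + 1) := by
  show (rec2 q 1 0 (n+1)).2 = _
  rw [rec2_succ_snd]; rfl
lemma be_rec (q : ℕ → ℤ) (n : ℕ) : be q (n + 2) = be q n - q n * be q (n + 1) := by
  show (rec2 q 0 1 (n+1)).2 = _
  rw [rec2_succ_snd]; rfl

lemma det_eq (q : ℕ → ℤ) (n : ℕ) :
    al q n * be q (n + 1) - al q (n + 1) * be q n = (-1) ^ n := by
  induction n with
  | zero => simp [al0, al1, be0, be1]
  | succ n ih =>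
    rw [al_rec, be_rec, pow_succ]
    ring_nf
    ring_nf at ih
    linarith [ih]

lemma al_sign (q : ℕ → ℤ) (hq : ∀ n, 1 ≤ q n) (n : ℕ) :
    1 ≤ (-1) ^ n * al q (n + 2) ∧ 1 ≤ (-1) ^ (n + 1) * al q (n + 3) := by
  induction n with
  | zero =>
    constructor
    · rw [al_rec]; simp [al0, al1]
    · have h3 : al q 3 = - q 1 := by
        rw [show (3:ℕ) = 1 + 2 from rfl, al_rec]
        rw [al_rec]; simp [al0, al1]
      rw [h3]; have := hq 1; simp; linarith
  | succ n ih =>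
    obtain ⟨ih1, ih2⟩ := ih
    refine ⟨ih2, ?_⟩
    rw [show n + 1 + 3 = (n + 2) + 2 from rfl, al_rec]
    have hqn := hq (n + 2)
    rcases Nat.even_or_odd n with h | h
    · have h1 : (-1 : ℤ) ^ n = 1 := h.neg_one_pow
      have h2 : (-1 : ℤ) ^ (n + 1) = -1 := by rw [pow_succ, h1]; ring
      have h3 : (-1 : ℤ) ^ (n + 2) = 1 := by rw [pow_succ, h2]; ring
      rw [h1] at ih1; rw [h2] at ih2
      rw [show n + 1 + 1 = n + 2 from rfl, h3]
      nlinarith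
    · have h1 : (-1 : ℤ) ^ n = -1 := h.neg_one_pow
      have h2 : (-1 : ℤ) ^ (n + 1) = 1 := by rw [pow_succ, h1]; ring
      have h3 : (-1 : ℤ) ^ (n + 2) = -1 := by rw [pow_succ, h2]; ring
      rw [h1] at ih1; rw [h2] at ih2
      rw [show n + 1 + 1 = n + 2 from rfl, h3]
      nlinarith

section Seq
variable (x : ℝ) (e : ℕ → ℝ) (q : ℕ → ℤ)
  (he0 : e 0 = x) (he1 : e 1 = 1)
  (hrec : ∀ n, e (n + 2) = e n - (q n : ℝ) * e (n + 1))

include hrec he0 he1 in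
theorem eab : ∀ n, e n = (al q n : ℝ) * x + (be q n : ℝ) := by
  have key : ∀ n, e n = (al q n : ℝ) * x + be q n ∧ e (n+1) = (al q (n+1) : ℝ) * x + be q (n+1) := by
    intro n
    induction n with
    | zero => simp [al0, al1, be0, be1, he0, he1]
    | succ n ih =>
      refine ⟨ih.2, ?_⟩
      rw [hrec n, al_rec, be_rec, ih.1, ih.2]
      push_cast
      ring
  exact fun n => (key n).1

include hrec he0 he1 in
theorem ekey (n : ℕ) :
    (al q n : ℝ) * e (n + 1) - (al q (n + 1) : ℝ) * e n = (-1) ^ n := by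
  have h1 := eab x e q he0 he1 hrec n
  have h2 := eab x e q he0 he1 hrec (n + 1)
  have h3 := det_eq q n
  rw [h1, h2]
  have h3' : ((al q n * be q (n + 1) - al q (n + 1) * be q n : ℤ) : ℝ) = ((-1 : ℤ) ^ n : ℝ) := by
    rw [h3]; push_cast; ring
  push_cast at h3' ⊢
  nlinarith [h3']

variable (hpos : ∀ n, 0 < e n) (hq1 : ∀ n, 1 ≤ q n) (hdec : ∀ n, e (n + 2) ≤ e (n + 1))

include hpos hq1 hrec he0 he1 in
theorem abound (n : ℕ) : |(al q (n + 3) : ℝ)| * e (n + 2) ≤ 1 := by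
  have hs := al_sign q hq1 n
  have hk := ekey x e q he0 he1 hrec (n + 2)
  have hp2 := hpos (n + 2)
  have hp3 := hpos (n + 3)
  rcases Nat.even_or_odd n with h | h
  · have h1 : (-1 : ℤ) ^ n = 1 := h.neg_one_pow
    have h1' : (-1 : ℝ) ^ (n + 2) = 1 := (h.add even_two).neg_one_pow
    have h2 : (-1 : ℤ) ^ (n + 1) = -1 := by rw [pow_succ, h1]; ring
    rw [h1] at hs; rw [h2] at hs
    rw [h1'] at hk
    obtain ⟨hs1, hs2⟩ := hs
    simp only [one_mul, neg_one_mul] at hs1 hs2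
    have habs : |(al q (n + 3) : ℝ)| = -(al q (n + 3) : ℝ) := by
      rw [abs_of_nonpos]; exact_mod_cast (show al q (n+3) ≤ 0 by linarith)
    rw [habs]
    have hc2 : (1 : ℝ) ≤ (al q (n + 2) : ℝ) := by exact_mod_cast hs1
    nlinarith [mul_pos (lt_of_lt_of_le zero_lt_one hc2) hp3]
  · have h1 : (-1 : ℤ) ^ n = -1 := h.neg_one_pow
    have h1' : (-1 : ℝ) ^ (n + 2) = -1 := by
      have h3 : Odd (n + 2) := by
        rcases h with ⟨k, hk'⟩; exact ⟨k + 1, by omega⟩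
      exact h3.neg_one_pow
    have h2 : (-1 : ℤ) ^ (n + 1) = 1 := by rw [pow_succ, h1]; ring
    rw [h1] at hs; rw [h2] at hs
    rw [h1'] at hk
    obtain ⟨hs1, hs2⟩ := hs
    simp only [one_mul, neg_one_mul] at hs1 hs2
    have habs : |(al q (n + 3) : ℝ)| = (al q (n + 3) : ℝ) := by
      rw [abs_of_nonneg]; exact_mod_cast (show (0:ℤ) ≤ al q (n+3) by linarith)
    rw [habs]
    have hc2 : (al q (n + 2) : ℝ) ≤ -1 := by exact_mod_cast (show al q (n+2) ≤ -1 by linarith)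
    nlinarith [mul_pos hp3 (show (0:ℝ) < -(al q (n+2):ℝ) by linarith)]

include hpos hq1 hdec hrec he0 he1 in
theorem abound' (n : ℕ) : |(al q (n + 3) : ℝ)| * e (n + 3) ≤ 1 :=
  le_trans (mul_le_mul_of_nonneg_left (hdec (n + 1)) (abs_nonneg _))
    (abound x e q he0 he1 hrec hpos hq1 n)

end Seq

section Triple
variable (A B C : ℤ) (x : ℝ)
  (hquad : (A : ℝ) * x ^ 2 + (B : ℝ) * x + (C : ℝ) = 0)
  (e : ℕ → ℝ) (al be : ℕ → ℤ)
  (heab : ∀ n, e n = al n * x + be n)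
  (hdet : ∀ n, al n * be (n + 1) - al (n + 1) * be n = (-1) ^ n)
  (hpos : ∀ n, 0 < e n)

local notation "Cc" => fun n => A * (be n)^2 - B * (al n * be n) + C * (al n)^2
local notation "Bb" => fun n => -(2*A) * (be n * be (n+1)) + B * (al n * be (n+1) + al (n+1) * be n) - (2*C) * (al n * al (n+1))

include hquad heab in
theorem root' (n : ℕ) :
    (Cc (n+1) : ℝ) * e n ^ 2 + (Bb n : ℝ) * (e n * e (n + 1)) + (Cc n : ℝ) * e (n + 1) ^ 2 = 0 := by
  rw [heab n, heab (n + 1)]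
  push_cast
  linear_combination ((al n : ℝ) * (be (n+1) : ℝ) - (al (n+1) : ℝ) * (be n : ℝ))^2 * hquad

include hquad heab hpos in
theorem root (n : ℕ) :
    (Cc (n+1) : ℝ) * (e n / e (n + 1)) ^ 2 + (Bb n : ℝ) * (e n / e (n + 1)) + (Cc n : ℝ) = 0 := by
  have h := root' A B C x hquad e al be heab n
  have h2 := (hpos (n + 1)).ne'
  field_simp
  push_cast at h ⊢
  linear_combination h

include hdet in
theorem disc (n : ℕ) :
    (Bb n) ^ 2 - 4 * (Cc (n + 1)) * (Cc n) = B ^ 2 - 4 * A * C := by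
  have hd := hdet n
  have hd2 : (al n * be (n + 1) - al (n + 1) * be n) ^ 2 = 1 := by
    rw [hd, ← pow_mul, mul_comm n 2, pow_mul]; norm_num
  linear_combination (B ^ 2 - 4 * A * C) * hd2

include hquad heab in
theorem creal (n : ℕ) :
    (Cc n : ℝ) = A * e n ^ 2 - (2 * A * x + B) * ((al n : ℝ) * e n) := by
  have hb : (be n : ℝ) = e n - al n * x := by rw [heab n]; ring
  push_cast
  rw [hb]
  linear_combination (al n : ℝ)^2 * hquad

include hquad heab hpos in
theorem cbound (n : ℕ) (hae : |(al n : ℝ)| * e n ≤ 1) (hex : e n ≤ x) (hx0 : 0 < x) :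
    |(Cc n : ℝ)| ≤ |(A:ℝ)| * x ^ 2 + |2 * (A:ℝ) * x + B| := by
  rw [creal A B C x hquad e al be heab n]
  have h1 : |(A:ℝ) * e n ^ 2| ≤ |(A:ℝ)| * x ^ 2 := by
    rw [abs_mul]
    have h2 : |e n ^ 2| ≤ x ^ 2 := by
      rw [abs_of_nonneg (by positivity)]
      have := (hpos n).le
      nlinarith
    exact mul_le_mul_of_nonneg_left h2 (abs_nonneg _)
  have h2 : |(2 * (A:ℝ) * x + B) * ((al n : ℝ) * e n)| ≤ |2 * (A:ℝ) * x + B| := by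
    rw [abs_mul]
    have h3 : |(al n : ℝ) * e n| ≤ 1 := by
      rw [abs_mul, abs_of_nonneg (hpos n).le]; exact hae
    nlinarith [abs_nonneg (2 * (A:ℝ) * x + B)]
  calc |(A:ℝ) * e n ^ 2 - (2 * A * x + B) * ((al n : ℝ) * e n)|
      ≤ |(A:ℝ) * e n ^ 2| + |(2 * (A:ℝ) * x + B) * ((al n : ℝ) * e n)| := abs_sub _ _
    _ ≤ _ := by linarith

end Triple

theorem three_roots (a b c : ℤ) (hd : b ^ 2 - 4 * a * c ≠ 0) (r1 r2 r3 : ℝ)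
    (h1 : (a : ℝ) * r1 ^ 2 + b * r1 + c = 0)
    (h2 : (a : ℝ) * r2 ^ 2 + b * r2 + c = 0)
    (h3 : (a : ℝ) * r3 ^ 2 + b * r3 + c = 0) :
    r1 = r2 ∨ r1 = r3 ∨ r2 = r3 := by
  by_contra hcon
  push_neg at hcon
  obtain ⟨h12, h13, h23⟩ := hcon
  have lin : ∀ s t : ℝ, s ≠ t → (a : ℝ) * s ^ 2 + b * s + c = 0 →
      (a : ℝ) * t ^ 2 + b * t + c = 0 → (a : ℝ) * (s + t) + b = 0 := by
    intro s t hst hs ht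
    have hf : (s - t) * ((a : ℝ) * (s + t) + b) = 0 := by linear_combination hs - ht
    rcases mul_eq_zero.mp hf with h | h
    · exact absurd (sub_eq_zero.mp h) hst
    · exact h
  have e12 := lin r1 r2 h12 h1 h2
  have e13 := lin r1 r3 h13 h1 h3
  have ha : (a : ℝ) = 0 := by
    have hz : (a : ℝ) * (r2 - r3) = 0 := by linarith
    rcases mul_eq_zero.mp hz with h | h
    · exact h
    · exact absurd (sub_eq_zero.mp h) h23
  have hb : (b : ℝ) = 0 := by
    have hb1 : (b : ℝ) * (r1 - r2) = 0 := by
      have h1' : (b : ℝ) * r1 + c = 0 := by rw [ha] at h1; linarith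
      have h2' : (b : ℝ) * r2 + c = 0 := by rw [ha] at h2; linarith
      linarith
    rcases mul_eq_zero.mp hb1 with h | h
    · exact h
    · exact absurd (sub_eq_zero.mp h) h12
  have hc : (c : ℝ) = 0 := by rw [ha, hb] at h1; linarith
  have ha' : a = 0 := by exact_mod_cast ha
  have hb' : b = 0 := by exact_mod_cast hb
  have hc' : c = 0 := by exact_mod_cast hc
  apply hd
  rw [ha', hb', hc']; ring

theorem inf_fiber {α β : Type*} (g : α → β) (s : Set α) (hs : s.Infinite)
    (T : Set β) (hT : T.Finite) (hmap : ∀ a ∈ s, g a ∈ T) :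
    ∃ y, {a | a ∈ s ∧ g a = y}.Infinite := by
  by_contra h
  push_neg at h
  have hsub : s ⊆ ⋃ y ∈ T, {a | a ∈ s ∧ g a = y} :=
    fun a ha => Set.mem_biUnion (hmap a ha) ⟨ha, rfl⟩
  exact hs ((hT.biUnion (fun y _ => h y)).subset hsub)

theorem disc_ne (A B C : ℤ) (x : ℝ) (hirr : Irrational x) (hA : A ≠ 0)
    (hquad : (A : ℝ) * x ^ 2 + (B : ℝ) * x + (C : ℝ) = 0) :
    B ^ 2 - 4 * A * C ≠ 0 := by
  intro h0
  have hx : (2 * (A:ℝ) * x + B) ^ 2 = 0 := by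
    have h0' : ((B:ℝ))^2 - 4 * A * C = 0 := by exact_mod_cast congrArg (Int.cast : ℤ → ℝ) h0
    linear_combination 4 * (A:ℝ) * hquad + h0'
  have hx2 : 2 * (A:ℝ) * x + B = 0 := by
    exact pow_eq_zero_iff (n := 2) (by norm_num) |>.mp hx
  have hA' : (2 * (A:ℝ)) ≠ 0 := by
    simp only [ne_eq, mul_eq_zero]
    push_neg
    exact ⟨two_ne_zero, by exact_mod_cast hA⟩
  apply hirr
  refine ⟨(-B : ℚ) / (2 * A), ?_⟩
  push_cast
  field_simp
  linarith

end QIAux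

open QIAux in
/-- Lagrange's theorem (attributed by the paper to Theaetetus): the
anthyphairesis of a quadratic irrational `x > 1` to `1` never terminates and
its quotient sequence is eventually periodic. -/
theorem quadratic_irrational_eventually_periodic
    (x : ℝ) (hx1 : 1 < x) (hirr : Irrational x)
    (A B C : ℤ) (hA : A ≠ 0)
    (hquad : (A : ℝ) * x ^ 2 + (B : ℝ) * x + (C : ℝ) = 0)
    (e : ℕ → ℝ) (he : IsAnthSeq x 1 e) :
    (∀ n : ℕ, e n ≠ 0) ∧
    ∃ N p : ℕ, 0 < p ∧ ∀ k : ℕ, N ≤ k →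
      ⌊e (k + p) / e (k + p + 1)⌋ = ⌊e k / e (k + 1)⌋ := by
  obtain ⟨he0, he1, herec⟩ := he
  -- Part 1: positivity and irrationality
  have inv1 : ∀ n : ℕ, 0 < e n ∧ 0 < e (n + 1) ∧ Irrational (e n / e (n + 1)) := by
    intro n
    induction n with
    | zero =>
      refine ⟨by rw [he0]; linarith, by rw [he1]; norm_num, ?_⟩
      rw [he0, he1, div_one]; exact hirr
    | succ n ih =>
      obtain ⟨h1, h2, h3⟩ := ih
      have hq := (herec n).1 (ne_of_gt h2)
      have hfr : Irrational (Int.fract (e n / e (n + 1))) := by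
        unfold Int.fract; exact h3.sub_intCast _
      have hfr0 : 0 < Int.fract (e n / e (n + 1)) :=
        lt_of_le_of_ne (Int.fract_nonneg _) (Ne.symm hfr.ne_zero)
      have heq : e (n + 2) = Int.fract (e n / e (n + 1)) * e (n + 1) := by
        rw [hq, Int.fract, sub_mul, div_mul_cancel₀ _ (ne_of_gt h2)]
      have h4 : 0 < e (n + 2) := by rw [heq]; positivity
      refine ⟨h2, h4, ?_⟩
      have hh : e (n + 1) / e (n + 2) = (Int.fract (e n / e (n + 1)))⁻¹ := by
        rw [heq]; field_simp
      rw [hh]; exact hfr.inv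
  have hpos : ∀ n, 0 < e n := fun n => (inv1 n).1
  have hirr_r : ∀ n, Irrational (e n / e (n + 1)) := fun n => (inv1 n).2.2
  have hrec : ∀ n, e (n + 2) = e n - (⌊e n / e (n + 1)⌋ : ℝ) * e (n + 1) :=
    fun n => (herec n).1 (hpos (n + 1)).ne'
  have hfri : ∀ n, Irrational (Int.fract (e n / e (n + 1))) := by
    intro n; unfold Int.fract; exact (hirr_r n).sub_intCast _
  have hfr0 : ∀ n, 0 < Int.fract (e n / e (n + 1)) :=
    fun n => lt_of_le_of_ne (Int.fract_nonneg _) (Ne.symm (hfri n).ne_zero)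
  have heq : ∀ n, e (n + 2) = Int.fract (e n / e (n + 1)) * e (n + 1) := by
    intro n
    rw [hrec n, Int.fract, sub_mul, div_mul_cancel₀ _ (hpos (n + 1)).ne']
  have hdec : ∀ n, e (n + 2) ≤ e (n + 1) := by
    intro n
    rw [heq n]
    nlinarith [Int.fract_lt_one (e n / e (n + 1)), hpos (n + 1), hfr0 n]
  have rfract : ∀ n, e (n + 1) / e (n + 2) = (Int.fract (e n / e (n + 1)))⁻¹ := by
    intro n
    rw [heq n, mul_comm, div_mul_eq_div_div, div_self (hpos (n + 1)).ne', one_div]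
  have hr1 : ∀ n, 1 < e n / e (n + 1) := by
    intro n
    cases n with
    | zero => rw [he0, he1, div_one]; exact hx1
    | succ n =>
      rw [rfract n]
      exact (one_lt_inv₀ (hfr0 n)).mpr (Int.fract_lt_one _)
  have hq1 : ∀ n, 1 ≤ ⌊e n / e (n + 1)⌋ :=
    fun n => Int.le_floor.mpr (by exact_mod_cast (hr1 n).le)
  have helex : ∀ n, e n ≤ x := by
    have h1 : ∀ m, e (m + 1) ≤ 1 := by
      intro m
      induction m with
      | zero => rw [he1]
      | succ m ih => exact le_trans (hdec m) ih
    intro n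
    cases n with
    | zero => rw [he0]
    | succ n => linarith [h1 n]
  -- the quotient sequence
  set Q : ℕ → ℤ := fun n => ⌊e n / e (n + 1)⌋ with hQ
  have hrecQ : ∀ n, e (n + 2) = e n - (Q n : ℝ) * e (n + 1) := hrec
  have heab := eab x e Q he0 he1 hrecQ
  have hdet := det_eq Q
  have habound := abound' x e Q he0 he1 hrecQ hpos hq1 hdec
  -- the triple of integer coefficients
  set Cc : ℕ → ℤ := fun n => A * (be Q n)^2 - B * (al Q n * be Q n) + C * (al Q n)^2 with hCc
  set Bb : ℕ → ℤ := fun n => -(2*A) * (be Q n * be Q (n+1)) + B * (al Q n * be Q (n+1) + al Q (n+1) * be Q n) - (2*C) * (al Q n * al Q (n+1)) with hBb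
  have hroot : ∀ n, (Cc (n+1) : ℝ) * (e n / e (n + 1)) ^ 2 + (Bb n : ℝ) * (e n / e (n + 1)) + (Cc n : ℝ) = 0 :=
    root A B C x hquad e (al Q) (be Q) heab hpos
  have hdisc : ∀ n, (Bb n) ^ 2 - 4 * (Cc (n + 1)) * (Cc n) = B ^ 2 - 4 * A * C :=
    disc A B C (al Q) (be Q) hdet
  have hDne : B ^ 2 - 4 * A * C ≠ 0 := disc_ne A B C x hirr hA hquad
  -- bounds
  set K : ℝ := |(A:ℝ)| * x ^ 2 + |2 * (A:ℝ) * x + B| with hK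
  set M : ℤ := max ⌈K⌉ 0 with hM
  have hCM : ∀ m, 3 ≤ m → |Cc m| ≤ M := by
    intro m hm
    obtain ⟨n, rfl⟩ : ∃ n, m = n + 3 := ⟨m - 3, by omega⟩
    have h1 := cbound A B C x hquad e (al Q) (be Q) heab hpos (n + 3)
      (habound n) (helex (n + 3)) (by linarith)
    have h2 : |(Cc (n + 3) : ℝ)| ≤ (M : ℝ) :=
      le_trans h1 (le_trans (Int.le_ceil K) (by exact_mod_cast le_max_left ⌈K⌉ 0))
    have h3 : ((|Cc (n + 3)| : ℤ) : ℝ) ≤ (M : ℝ) := by rw [Int.cast_abs]; exact h2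
    exact_mod_cast h3
  have hM0 : 0 ≤ M := le_max_right _ _
  set M2 : ℤ := |B ^ 2 - 4 * A * C| + 4 * M ^ 2 with hM2
  have hBM : ∀ n, 3 ≤ n → |Bb n| ≤ M2 := by
    intro n hn
    have hd := hdisc n
    have h1 := hCM n hn
    have h2 := hCM (n + 1) (by omega)
    have hprod : Cc (n + 1) * Cc n ≤ M ^ 2 := by
      calc Cc (n + 1) * Cc n ≤ |Cc (n + 1) * Cc n| := le_abs_self _
        _ = |Cc (n + 1)| * |Cc n| := abs_mul _ _
        _ ≤ M * M := mul_le_mul h2 h1 (abs_nonneg _) hM0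
        _ = M ^ 2 := (sq M).symm
    have hsq : (Bb n) ^ 2 ≤ M2 := by
      have := le_abs_self (B ^ 2 - 4 * A * C)
      rw [hM2]; nlinarith
    rcases eq_or_ne (Bb n) 0 with h | h
    · rw [h]; simp
      have : (0:ℤ) ≤ |B ^ 2 - 4 * A * C| := abs_nonneg _
      nlinarith
    · have h1' : 1 ≤ |Bb n| := Int.one_le_abs h
      nlinarith [sq_abs (Bb n)]
  set M3 : ℤ := max M M2 with hM3
  set g : ℕ → ℤ × ℤ × ℤ := fun n => (Cc (n + 1), Bb n, Cc n) with hg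
  set T : Set (ℤ × ℤ × ℤ) := Set.Icc (-M3, -M3, -M3) (M3, M3, M3) with hT
  have hmap : ∀ n ∈ Set.Ici 3, g n ∈ T := by
    intro n hn
    have hn3 : 3 ≤ n := hn
    have b1 := abs_le.mp (le_trans (hCM (n + 1) (by omega)) (le_max_left M M2))
    have b2 := abs_le.mp (le_trans (hBM n hn3) (le_max_right M M2))
    have b3 := abs_le.mp (le_trans (hCM n hn3) (le_max_left M M2))
    simp only [hT, hg, Set.mem_Icc, Prod.le_def]
    exact ⟨⟨b1.1, b2.1, b3.1⟩, ⟨b1.2, b2.2, b3.2⟩⟩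
  obtain ⟨y, hy⟩ := inf_fiber g (Set.Ici 3) (Set.Ici_infinite 3) T (Set.finite_Icc _ _) hmap
  obtain ⟨i, hi⟩ := hy.nonempty
  obtain ⟨j, hj, hij⟩ := hy.exists_gt i
  obtain ⟨k, hk, hjk⟩ := hy.exists_gt j
  have gij : g i = g j := hi.2.trans hj.2.symm
  have gik : g i = g k := hi.2.trans hk.2.symm
  have gij1 : Cc (i + 1) = Cc (j + 1) := congrArg Prod.fst gij
  have gij2 : Bb i = Bb j := congrArg (fun z => z.2.1) gij
  have gij3 : Cc i = Cc j := congrArg (fun z => z.2.2) gij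
  have gik1 : Cc (i + 1) = Cc (k + 1) := congrArg Prod.fst gik
  have gik2 : Bb i = Bb k := congrArg (fun z => z.2.1) gik
  have gik3 : Cc i = Cc k := congrArg (fun z => z.2.2) gik
  have hdne : (Bb i) ^ 2 - 4 * (Cc (i + 1)) * (Cc i) ≠ 0 := by
    rw [hdisc i]; exact hDne
  have hrj : (Cc (i+1) : ℝ) * (e j / e (j + 1)) ^ 2 + (Bb i : ℝ) * (e j / e (j + 1)) + (Cc i : ℝ) = 0 := by
    rw [gij1, gij2, gij3]; exact hroot j
  have hrk : (Cc (i+1) : ℝ) * (e k / e (k + 1)) ^ 2 + (Bb i : ℝ) * (e k / e (k + 1)) + (Cc i : ℝ) = 0 := by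
    rw [gik1, gik2, gik3]; exact hroot k
  have htr := three_roots (Cc (i+1)) (Bb i) (Cc i) hdne
    (e i / e (i + 1)) (e j / e (j + 1)) (e k / e (k + 1)) (hroot i) hrj hrk
  -- extract a pair m < m' with equal ratios
  obtain ⟨m, m', hmm', hreq⟩ :
      ∃ m m' : ℕ, m < m' ∧ e m / e (m + 1) = e m' / e (m' + 1) := by
    rcases htr with h | h | h
    · exact ⟨i, j, hij, h⟩
    · exact ⟨i, k, lt_trans hij hjk, h⟩
    · exact ⟨j, k, hjk, h⟩
  -- periodicity propagates
  refine ⟨fun n => (hpos n).ne', m, m' - m, by omega, ?_⟩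
  have hper : ∀ t, m ≤ t → e t / e (t + 1) = e (t + (m' - m)) / e (t + (m' - m) + 1) := by
    intro t ht
    induction t, ht using Nat.le_induction with
    | base => rw [show m + (m' - m) = m' from by omega]; exact hreq
    | succ t ht ih =>
      rw [show t + 1 + (m' - m) = (t + (m' - m)) + 1 from by omega]
      calc e (t + 1) / e (t + 1 + 1) = (Int.fract (e t / e (t + 1)))⁻¹ := rfract t
        _ = (Int.fract (e (t + (m' - m)) / e (t + (m' - m) + 1)))⁻¹ := by rw [ih]
        _ = e (t + (m' - m) + 1) / e (t + (m' - m) + 1 + 1) := (rfract (t + (m' - m))).symm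
  intro k0 hk0
  rw [hper k0 hk0]
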